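/- For every y ∈ {0,1} and m ∈ {0,1}: P(Y=y, M=m | X=1) + P(Y=1−y, M=m | X=0) − 1 ≤ P_c(y,1−y,m,m) − P_c(1−y,y,m,m). -/

import Mathlib

open MeasureTheory ProbabilityTheory

/-- Conditional probability `P(A | B) = mu(A ∩ B) / mu(B)` as a real number. -/
noncomputable def condP {Ω : Type*} [MeasurableSpace Ω] (μ : Measure Ω)
    (A B : Set Ω) : ℝ :=
  (μ (A ∩ B)).toReal / (μ B).toReal

/-- Counterfactual probability `P_c(y1, y0, m1, m0)`. -/
noncomputable def Pc {Ω : Type*} [MeasurableSpace Ω] (μ : Measure Ω)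
    (Y1 Y0 M1 M0 : Ω → ℕ) (y1 y0 m1 m0 : ℕ) : ℝ :=
  (μ {ω | Y1 ω = y1 ∧ Y0 ω = y0 ∧ M1 ω = m1 ∧ M0 ω = m0}).toReal

theorem statement3
    {Ω : Type*} [MeasurableSpace Ω] (μ : Measure Ω) [IsProbabilityMeasure μ]
    (Y1 Y0 M1 M0 X Y M : Ω → ℕ)
    (hY1meas : Measurable Y1) (hY0meas : Measurable Y0)
    (hM1meas : Measurable M1) (hM0meas : Measurable M0)
    (hXmeas : Measurable X)
    (hY1bin : ∀ ω, Y1 ω ≤ 1) (hY0bin : ∀ ω, Y0 ω ≤ 1)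
    (hM1bin : ∀ ω, M1 ω ≤ 1) (hM0bin : ∀ ω, M0 ω ≤ 1)
    (hXbin : ∀ ω, X ω ≤ 1)
    (hXpos : 0 < μ {ω | X ω = 1}) (hXlt : μ {ω | X ω = 1} < 1)
    (hindep : IndepFun X (fun ω => (Y1 ω, Y0 ω, M1 ω, M0 ω)) μ)
    (hYcons1 : ∀ ω, X ω = 1 → Y ω = Y1 ω)
    (hYcons0 : ∀ ω, X ω = 0 → Y ω = Y0 ω)
    (hMcons1 : ∀ ω, X ω = 1 → M ω = M1 ω)
    (hMcons0 : ∀ ω, X ω = 0 → M ω = M0 ω)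
    (y m : ℕ) (hy : y ≤ 1) (hm : m ≤ 1)
    :
    condP μ {ω | Y ω = y ∧ M ω = m} {ω | X ω = 1}
      + condP μ {ω | Y ω = 1 - y ∧ M ω = m} {ω | X ω = 0} - 1
    ≤ Pc μ Y1 Y0 M1 M0 y (1 - y) m m - Pc μ Y1 Y0 M1 M0 (1 - y) y m m := by
  classical
  set g : Ω → ℕ × ℕ × ℕ × ℕ := fun ω => (Y1 ω, Y0 ω, M1 ω, M0 ω) with hg
  set A : Set Ω := {ω | Y1 ω = y ∧ M1 ω = m} with hA
  set B : Set Ω := {ω | Y0 ω = 1 - y ∧ M0 ω = m} with hB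
  have hyne : (1 - y : ℕ) ≠ y := by interval_cases y <;> simp
  -- A and B as preimages of measurable product sets
  have ht1 : MeasurableSet (({y} : Set ℕ) ×ˢ (Set.univ : Set ℕ) ×ˢ ({m} : Set ℕ) ×ˢ (Set.univ : Set ℕ)) :=
    (measurableSet_singleton y).prod (MeasurableSet.univ.prod
      ((measurableSet_singleton m).prod MeasurableSet.univ))
  have ht0 : MeasurableSet ((Set.univ : Set ℕ) ×ˢ ({1 - y} : Set ℕ) ×ˢ (Set.univ : Set ℕ) ×ˢ ({m} : Set ℕ)) :=
    MeasurableSet.univ.prod ((measurableSet_singleton (1 - y)).prod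
      (MeasurableSet.univ.prod (measurableSet_singleton m)))
  have hApre : g ⁻¹' (({y} : Set ℕ) ×ˢ (Set.univ : Set ℕ) ×ˢ ({m} : Set ℕ) ×ˢ (Set.univ : Set ℕ)) = A := by
    ext ω; simp only [hg, hA, Set.mem_preimage, Set.mem_prod, Set.mem_singleton_iff,
      Set.mem_univ, and_true, true_and, Set.mem_setOf_eq]
  have hBpre : g ⁻¹' ((Set.univ : Set ℕ) ×ˢ ({1 - y} : Set ℕ) ×ˢ (Set.univ : Set ℕ) ×ˢ ({m} : Set ℕ)) = B := by
    ext ω; simp only [hg, hB, Set.mem_preimage, Set.mem_prod, Set.mem_singleton_iff,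
      Set.mem_univ, and_true, true_and, Set.mem_setOf_eq]
  have hAmeas : MeasurableSet A := by
    rw [← hApre]; exact (hY1meas.prodMk (hY0meas.prodMk (hM1meas.prodMk hM0meas))) ht1
  have hBmeas : MeasurableSet B := by
    rw [← hBpre]; exact (hY1meas.prodMk (hY0meas.prodMk (hM1meas.prodMk hM0meas))) ht0
  -- X preimages
  have hX1 : {ω | X ω = 1} = X ⁻¹' {1} := rfl
  have hX0 : {ω | X ω = 0} = X ⁻¹' {0} := rfl
  -- independence products
  have hmul1 : μ (A ∩ {ω | X ω = 1}) = μ A * μ {ω | X ω = 1} := by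
    have h := hindep.measure_inter_preimage_eq_mul
      (s := ({1} : Set ℕ)) (t := ({y} : Set ℕ) ×ˢ (Set.univ : Set ℕ) ×ˢ ({m} : Set ℕ) ×ˢ (Set.univ : Set ℕ))
      (measurableSet_singleton 1) ht1
    rw [hApre] at h
    rw [Set.inter_comm, hX1, h, mul_comm]
  have hmul0 : μ (B ∩ {ω | X ω = 0}) = μ B * μ {ω | X ω = 0} := by
    have h := hindep.measure_inter_preimage_eq_mul
      (s := ({0} : Set ℕ)) (t := (Set.univ : Set ℕ) ×ˢ ({1 - y} : Set ℕ) ×ˢ (Set.univ : Set ℕ) ×ˢ ({m} : Set ℕ))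
      (measurableSet_singleton 0) ht0
    rw [hBpre] at h
    rw [Set.inter_comm, hX0, h, mul_comm]
  -- consistency: rewrite observed events
  have hobs1 : {ω | Y ω = y ∧ M ω = m} ∩ {ω | X ω = 1} = A ∩ {ω | X ω = 1} := by
    ext ω
    simp only [Set.mem_inter_iff, Set.mem_setOf_eq, hA]
    constructor
    · rintro ⟨⟨h1, h2⟩, hx⟩
      exact ⟨⟨by rw [← hYcons1 ω hx]; exact h1, by rw [← hMcons1 ω hx]; exact h2⟩, hx⟩
    · rintro ⟨⟨h1, h2⟩, hx⟩
      exact ⟨⟨by rw [hYcons1 ω hx]; exact h1, by rw [hMcons1 ω hx]; exact h2⟩, hx⟩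
  have hobs0 : {ω | Y ω = 1 - y ∧ M ω = m} ∩ {ω | X ω = 0} = B ∩ {ω | X ω = 0} := by
    ext ω
    simp only [Set.mem_inter_iff, Set.mem_setOf_eq, hB]
    constructor
    · rintro ⟨⟨h1, h2⟩, hx⟩
      exact ⟨⟨by rw [← hYcons0 ω hx]; exact h1, by rw [← hMcons0 ω hx]; exact h2⟩, hx⟩
    · rintro ⟨⟨h1, h2⟩, hx⟩
      exact ⟨⟨by rw [hYcons0 ω hx]; exact h1, by rw [hMcons0 ω hx]; exact h2⟩, hx⟩
  -- positivity of the two conditioning events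
  have hX1ne : (μ {ω | X ω = 1}).toReal ≠ 0 := by
    have hfin : μ {ω | X ω = 1} ≠ ⊤ := (measure_lt_top μ _).ne
    simp [ENNReal.toReal_eq_zero_iff, hXpos.ne', hfin]
  have hX0compl : {ω | X ω = 0} = {ω | X ω = 1}ᶜ := by
    ext ω
    have := hXbin ω
    simp only [Set.mem_setOf_eq, Set.mem_compl_iff]
    omega
  have hX0pos : μ {ω | X ω = 0} ≠ 0 := by
    have hms : MeasurableSet {ω | X ω = 1} := hXmeas (measurableSet_singleton 1)
    rw [hX0compl, prob_compl_eq_one_sub hms]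
    simp only [ne_eq, tsub_eq_zero_iff_le, not_le]
    exact hXlt
  have hX0ne : (μ {ω | X ω = 0}).toReal ≠ 0 := by
    have hfin : μ {ω | X ω = 0} ≠ ⊤ := (measure_lt_top μ _).ne
    simp [ENNReal.toReal_eq_zero_iff, hX0pos, hfin]
  -- compute the conditional probabilities
  have hc1 : condP μ {ω | Y ω = y ∧ M ω = m} {ω | X ω = 1} = (μ A).toReal := by
    rw [condP, hobs1, hmul1, ENNReal.toReal_mul, mul_div_assoc, div_self hX1ne, mul_one]
  have hc0 : condP μ {ω | Y ω = 1 - y ∧ M ω = m} {ω | X ω = 0} = (μ B).toReal := by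
    rw [condP, hobs0, hmul0, ENNReal.toReal_mul, mul_div_assoc, div_self hX0ne, mul_one]
  -- identify the counterfactual probabilities
  have hgood : Pc μ Y1 Y0 M1 M0 y (1 - y) m m = (μ (A ∩ B)).toReal := by
    have hset : {ω | Y1 ω = y ∧ Y0 ω = 1 - y ∧ M1 ω = m ∧ M0 ω = m} = A ∩ B := by
      ext ω
      simp only [Set.mem_setOf_eq, Set.mem_inter_iff, hA, hB]
      tauto
    rw [Pc, hset]
  set bad : Set Ω := {ω | Y1 ω = 1 - y ∧ Y0 ω = y ∧ M1 ω = m ∧ M0 ω = m} with hbad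
  have hbadsub : bad ⊆ (A ∪ B)ᶜ := by
    intro ω hω
    simp only [hbad, Set.mem_setOf_eq] at hω
    obtain ⟨h1, h2, h3, h4⟩ := hω
    simp only [Set.mem_compl_iff, Set.mem_union, Set.mem_setOf_eq, hA, hB]
    rintro (⟨ha, -⟩ | ⟨hb, -⟩) <;> omega
  -- key ENNReal facts
  have hkey1 : μ (A ∪ B) + μ (A ∩ B) = μ A + μ B := measure_union_add_inter A hBmeas
  have hkey2 : μ (A ∪ B) + μ bad ≤ 1 := by
    calc μ (A ∪ B) + μ bad ≤ μ (A ∪ B) + μ (A ∪ B)ᶜ := by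
          exact add_le_add_right (measure_mono hbadsub) _
      _ = 1 := by rw [measure_add_measure_compl (hAmeas.union hBmeas), measure_univ]
  -- convert to real
  have hfin : ∀ s : Set Ω, μ s ≠ ⊤ := fun s => (measure_lt_top μ s).ne
  have r1 : (μ (A ∪ B)).toReal + (μ (A ∩ B)).toReal = (μ A).toReal + (μ B).toReal := by
    rw [← ENNReal.toReal_add (hfin _) (hfin _), ← ENNReal.toReal_add (hfin _) (hfin _), hkey1]
  have r2 : (μ (A ∪ B)).toReal + (μ bad).toReal ≤ 1 := by
    have := ENNReal.toReal_mono (by simp) hkey2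
    rwa [ENNReal.toReal_add (hfin _) (hfin _), ENNReal.toReal_one] at this
  have hPcbad : Pc μ Y1 Y0 M1 M0 (1 - y) y m m = (μ bad).toReal := rfl
  rw [hc1, hc0, hgood, hPcbad]
  linarith
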